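/- Let k be a positive integer and d, r integers. The congruence du \equiv r (mod k) has a solution u with gcd(u,k) = 1 if and only if gcd(d,k) = gcd(r,k); moreover, in that case, the number of such solutions u modulo k is at most gcd(d,k). -/

import Mathlib

private lemma gcd_congr_aux {n a b : ℤ} (h : a ≡ b [ZMOD n]) :
    Int.gcd a n = Int.gcd b n := by
  obtain ⟨m, hm⟩ := Int.modEq_iff_dvd.mp h
  have hb : b = a + n * m := by linarith
  have hdvd1 : (Int.gcd a n : ℤ) ∣ Int.gcd b n := by
    refine Int.dvd_coe_gcd ?_ (Int.gcd_dvd_right _ _)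
    rw [hb]
    exact dvd_add (Int.gcd_dvd_left _ _) (Dvd.dvd.mul_right (Int.gcd_dvd_right _ _) m)
  have hdvd2 : (Int.gcd b n : ℤ) ∣ Int.gcd a n := by
    refine Int.dvd_coe_gcd ?_ (Int.gcd_dvd_right _ _)
    have : a = b - n * m := by linarith
    rw [this]
    exact dvd_sub (Int.gcd_dvd_left _ _) (Dvd.dvd.mul_right (Int.gcd_dvd_right _ _) m)
  exact Nat.dvd_antisymm (Int.natCast_dvd_natCast.mp hdvd1) (Int.natCast_dvd_natCast.mp hdvd2)

/-- Lift a residue coprime to `k₁` to one coprime to `k`, where `k₁ ∣ k`. -/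
private lemma lift_coprime {k₁ k : ℕ} (hk : 0 < k) (hdvd : k₁ ∣ k) (u : ℤ)
    (hu : Int.gcd u (k₁ : ℤ) = 1) :
    ∃ v : ℤ, Int.gcd v (k : ℤ) = 1 ∧ (k₁ : ℤ) ∣ v - u := by
  have hk₁ : k₁ ≠ 0 := by
    rintro rfl
    simp only [Nat.zero_dvd] at hdvd
    omega
  have : NeZero k := ⟨hk.ne'⟩
  have : NeZero k₁ := ⟨hk₁⟩
  -- the natural number representative of u mod k₁
  set n : ℕ := (u % (k₁ : ℤ)).toNat with hn
  have hncast : (n : ℤ) = u % (k₁ : ℤ) :=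
    Int.toNat_of_nonneg (Int.emod_nonneg u (by exact_mod_cast hk₁))
  have hmodeq : (n : ℤ) ≡ u [ZMOD (k₁ : ℤ)] := by
    rw [hncast]; exact Int.emod_emod_of_dvd u dvd_rfl
  have hngcd : Nat.Coprime n k₁ := by
    have := gcd_congr_aux hmodeq
    rw [hu] at this
    simpa [Int.gcd_natCast_natCast] using this
  -- unit in ZMod k₁ and its lift
  let w₁ : (ZMod k₁)ˣ := ZMod.unitOfCoprime n hngcd
  obtain ⟨w, hw⟩ := ZMod.unitsMap_surjective hdvd w₁
  refine ⟨((w : ZMod k).val : ℤ), ?_, ?_⟩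
  · have hc := ZMod.val_coe_unit_coprime w
    rw [Int.gcd_natCast_natCast]
    exact hc
  · -- v ≡ u mod k₁
    have hcast : (((w : ZMod k).val : ℤ) : ZMod k₁) = ((u : ℤ) : ZMod k₁) := by
      have h1 : (ZMod.castHom hdvd (ZMod k₁)) (w : ZMod k) = (w₁ : ZMod k₁) := by
        rw [ZMod.unitsMap_def] at hw
        simpa using congrArg Units.val hw
      have h2 : (((w : ZMod k).val : ℤ) : ZMod k₁)
          = (ZMod.castHom hdvd (ZMod k₁)) (w : ZMod k) := by
        push_cast
        rw [ZMod.natCast_val, ZMod.castHom_apply]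
      have h3 : ((w₁ : ZMod k₁) : ZMod k₁) = ((n : ℤ) : ZMod k₁) := by
        simp [w₁, ZMod.coe_unitOfCoprime]
      rw [h2, h1, h3]
      exact_mod_cast (ZMod.intCast_eq_intCast_iff _ _ _).mpr hmodeq
    have hme := (ZMod.intCast_eq_intCast_iff _ _ _).mp hcast
    have hd' := Int.modEq_iff_dvd.mp hme
    have hd'' := dvd_neg.mpr hd'
    rwa [neg_sub] at hd''

theorem congruence_solvable_iff (k : ℕ) (hk : 0 < k) (d r : ℤ) :
    ((∃ u : ℤ, Int.gcd u (k : ℤ) = 1 ∧ (d * u) % (k : ℤ) = r % (k : ℤ)) ↔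
      Int.gcd d (k : ℤ) = Int.gcd r (k : ℤ)) ∧
    (Int.gcd d (k : ℤ) = Int.gcd r (k : ℤ) →
      ((Finset.range k).filter
        (fun u => Nat.gcd u k = 1 ∧ (d * u) % (k : ℤ) = r % (k : ℤ))).card ≤
        Int.gcd d (k : ℤ)) := by
  have hkz : (k : ℤ) ≠ 0 := by exact_mod_cast hk.ne'
  have hgpos : 0 < Int.gcd d (k : ℤ) := Int.gcd_pos_iff.mpr (Or.inr hkz)
  set g : ℕ := Int.gcd d (k : ℤ) with hgdef
  have hgd : (g : ℤ) ∣ d := Int.gcd_dvd_left _ _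
  have hgk : (g : ℤ) ∣ (k : ℤ) := Int.gcd_dvd_right _ _
  have hgkn : g ∣ k := Int.natCast_dvd_natCast.mp hgk
  set k₁ : ℕ := k / g with hk₁def
  have hkk₁ : k = g * k₁ := (Nat.mul_div_cancel' hgkn).symm
  have hk₁pos : 0 < k₁ := Nat.pos_of_ne_zero (by rintro h; rw [h, mul_zero] at hkk₁; omega)
  set d₁ : ℤ := d / (g : ℤ) with hd₁def
  have hdd₁ : d = (g : ℤ) * d₁ := (Int.mul_ediv_cancel' hgd).symm
  have hkcast : (k : ℤ) = (g : ℤ) * (k₁ : ℤ) := by exact_mod_cast congrArg (Nat.cast : ℕ → ℤ) hkk₁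
  have hk₁cast : ((k₁ : ℕ) : ℤ) = (k : ℤ) / (g : ℤ) := by
    rw [hkcast]; rw [Int.mul_ediv_cancel_left _ (by exact_mod_cast hgpos.ne')]
  have hco : Int.gcd d₁ (k₁ : ℤ) = 1 := by
    rw [hd₁def, hk₁cast]
    exact Int.gcd_div_gcd_div_gcd hgpos
  -- forward direction
  have fwd : (∃ u : ℤ, Int.gcd u (k : ℤ) = 1 ∧ (d * u) % (k : ℤ) = r % (k : ℤ)) →
      Int.gcd d (k : ℤ) = Int.gcd r (k : ℤ) := by
    rintro ⟨u, hu, heq⟩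
    have hmod : d * u ≡ r [ZMOD (k : ℤ)] := heq
    have h1 : Int.gcd (d * u) (k : ℤ) = Int.gcd r (k : ℤ) := gcd_congr_aux hmod
    rw [← h1]
    have hcop : Nat.Coprime u.natAbs k := by
      have : Int.gcd u (k : ℤ) = Nat.gcd u.natAbs k := by
        simp [Int.gcd, Int.natAbs_natCast]
      rw [this] at hu
      exact hu
    show Int.gcd d (k : ℤ) = Int.gcd (d * u) (k : ℤ)
    have : Int.gcd (d * u) (k : ℤ) = Nat.gcd (d.natAbs * u.natAbs) k := by
      simp [Int.gcd, Int.natAbs_mul]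
    rw [this, Nat.Coprime.gcd_mul_right_cancel d.natAbs hcop]
    simp [Int.gcd]
  -- backward direction
  have bwd : Int.gcd d (k : ℤ) = Int.gcd r (k : ℤ) →
      (∃ u : ℤ, Int.gcd u (k : ℤ) = 1 ∧ (d * u) % (k : ℤ) = r % (k : ℤ)) := by
    intro hg
    have hgr : (g : ℤ) ∣ r := by rw [hgdef, hg]; exact Int.gcd_dvd_left _ _
    set r₁ : ℤ := r / (g : ℤ) with hr₁def
    have hrr₁ : r = (g : ℤ) * r₁ := (Int.mul_ediv_cancel' hgr).symm
    have hg' : g = Int.gcd r (k : ℤ) := by rw [hgdef, hg]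
    have hcor : Int.gcd r₁ (k₁ : ℤ) = 1 := by
      rw [hr₁def, hk₁cast, hg']
      exact Int.gcd_div_gcd_div_gcd (by rw [← hg']; exact hgpos)
    -- Bezout for d₁ and k₁
    obtain ⟨a, b, hab⟩ := Int.isCoprime_iff_gcd_eq_one.mpr hco
    -- hab : a * d₁ + b * k₁ = 1
    have hcoa : IsCoprime a (k₁ : ℤ) := ⟨d₁, b, by linear_combination hab⟩
    have hcou₁ : Int.gcd (a * r₁) (k₁ : ℤ) = 1 := by
      rw [← Int.isCoprime_iff_gcd_eq_one]
      exact IsCoprime.mul_left hcoa (Int.isCoprime_iff_gcd_eq_one.mpr hcor)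
    obtain ⟨u, hucop, hdvdu⟩ := lift_coprime hk ⟨g, by rw [hkk₁, Nat.mul_comm]⟩ (a * r₁) hcou₁
    obtain ⟨t, ht⟩ := hdvdu
    refine ⟨u, hucop, ?_⟩
    have hdvd : (k : ℤ) ∣ d * u - r := by
      refine ⟨d₁ * t - b * r₁, ?_⟩
      have ht' : u = a * r₁ + (k₁ : ℤ) * t := by linarith [ht]
      rw [hkcast, hdd₁, hrr₁]
      linear_combination (g : ℤ) * d₁ * ht' + (g : ℤ) * r₁ * hab
    have : r ≡ d * u [ZMOD (k : ℤ)] := Int.modEq_iff_dvd.mpr hdvd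
    exact this.symm
  refine ⟨⟨fwd, bwd⟩, ?_⟩
  intro hg
  -- counting part
  have hcoZ : IsCoprime (k₁ : ℤ) d₁ := (Int.isCoprime_iff_gcd_eq_one.mpr hco).symm
  refine le_trans (Finset.card_le_card_of_injOn (fun u => u / k₁)
    (t := Finset.range g) ?_ ?_) (by simp)
  · intro u hu
    simp only [Finset.mem_coe, Finset.mem_filter, Finset.mem_range] at hu ⊢
    exact (Nat.div_lt_iff_lt_mul hk₁pos).mpr (by omega)
  · intro u hu v hv huv
    simp only [Finset.coe_filter, Set.mem_setOf_eq, Finset.mem_range] at hu hv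
    obtain ⟨hult, -, hueq⟩ := hu
    obtain ⟨hvlt, -, hveq⟩ := hv
    have hmod : d * (u : ℤ) ≡ d * (v : ℤ) [ZMOD (k : ℤ)] := hueq.trans hveq.symm
    have hdvd : (k : ℤ) ∣ d * ((u : ℤ) - (v : ℤ)) := by
      have := Int.modEq_iff_dvd.mp hmod
      have h2 : d * ((u : ℤ) - (v : ℤ)) = -(d * (v:ℤ) - d * (u:ℤ)) := by ring
      rw [h2]
      exact dvd_neg.mpr this
    have hdvd2 : (k₁ : ℤ) ∣ d₁ * ((u : ℤ) - (v : ℤ)) := by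
      have : (g : ℤ) * (k₁ : ℤ) ∣ (g : ℤ) * (d₁ * ((u : ℤ) - (v : ℤ))) := by
        rw [← hkcast]
        calc (k : ℤ) ∣ d * ((u:ℤ) - (v:ℤ)) := hdvd
          _ = (g : ℤ) * (d₁ * ((u:ℤ) - (v:ℤ))) := by rw [hdd₁]; ring
      exact (mul_dvd_mul_iff_left (by exact_mod_cast hgpos.ne' : (g:ℤ) ≠ 0)).mp this
    have hdvd3 : (k₁ : ℤ) ∣ (u : ℤ) - (v : ℤ) := hcoZ.dvd_of_dvd_mul_left hdvd2
    -- conclude u = v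
    have hmodnat : u % k₁ = v % k₁ := by
      have : (u : ℤ) ≡ (v : ℤ) [ZMOD (k₁ : ℤ)] := by
        symm; exact Int.modEq_iff_dvd.mpr hdvd3
      have := Int.emod_emod_of_dvd (u : ℤ) (dvd_refl (k₁ : ℤ)) -- dummy
      have hmm : ((u % k₁ : ℕ) : ℤ) = ((v % k₁ : ℕ) : ℤ) := by
        push_cast
        exact ‹(u : ℤ) ≡ (v : ℤ) [ZMOD (k₁ : ℤ)]›
      exact_mod_cast hmm
    have h1 := Nat.div_add_mod u k₁
    have h2 := Nat.div_add_mod v k₁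
    have huv' : u / k₁ = v / k₁ := huv
    rw [← h1, ← h2, huv', hmodnat]
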